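/- In so(p+9) with p ≥ 1, writing 𝕆 = ℍ ⊕ εℍ with orthonormal basis e₁=ε, e₂=εk, e₃=εi, e₄=εj of εℍ and orthonormal e₅,e₆ ∈ ℝ^{p+1}, the elements X = L_i + √2(E₁₅ + E₃₆) and Y = R_j + √2(E₂₅ + E₄₆) commute: [X,Y] = 0. -/

import Mathlib

open scoped Quaternion

noncomputable section

/-- The octonions, via the Cayley–Dickson construction `𝕆 = ℍ ⊕ ℍ`. -/
abbrev Oct : Type := ℍ[ℝ] × ℍ[ℝ]

/-- Octonion multiplication (Cayley–Dickson). -/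
def omul (x y : Oct) : Oct :=
  (x.1 * y.1 - star y.2 * x.2, y.2 * x.1 + x.2 * star y.1)

/-- Left multiplication `L_q` as a real-linear endomorphism of `𝕆`. -/
def Lo (q : Oct) : Oct →ₗ[ℝ] Oct where
  toFun y := omul q y
  map_add' y z := by
    simp only [omul, Prod.fst_add, Prod.snd_add, star_add, mul_add, add_mul,
      Prod.mk_add_mk, Prod.mk.injEq]
    constructor <;> abel
  map_smul' c y := by
    simp only [omul, Prod.smul_fst, Prod.smul_snd, Quaternion.star_smul,
      mul_smul_comm, smul_mul_assoc, RingHom.id_apply, Prod.smul_mk, smul_sub,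
      smul_add, Prod.mk.injEq]

/-- Right multiplication `R_q` as a real-linear endomorphism of `𝕆`. -/
def Ro (q : Oct) : Oct →ₗ[ℝ] Oct where
  toFun y := omul y q
  map_add' y z := by
    simp only [omul, Prod.fst_add, Prod.snd_add, star_add, mul_add, add_mul,
      Prod.mk_add_mk, Prod.mk.injEq]
    constructor <;> abel
  map_smul' c y := by
    simp only [omul, Prod.smul_fst, Prod.smul_snd, Quaternion.star_smul,
      mul_smul_comm, smul_mul_assoc, RingHom.id_apply, Prod.smul_mk, smul_sub,
      smul_add, Prod.mk.injEq]

/-- The imaginary octonions. -/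
def ImO : Set Oct := {x | x.1.re = 0}

/-- A derivation of the octonions (an element of `g₂ ⊂ so(8)`). -/
def IsOctDer (D : Oct →ₗ[ℝ] Oct) : Prop :=
  ∀ x y : Oct, D (omul x y) = omul (D x) y + omul x (D y)

/-- The standard inner product on `𝕆 = ℍ ⊕ ℍ`. -/
def innO (x y : Oct) : ℝ := inner ℝ x.1 y.1 + inner ℝ x.2 y.2

/-- Membership in `so(8) = so(𝕆)`: skew-symmetry with respect to `innO`. -/
def IsSkewO (A : Oct →ₗ[ℝ] Oct) : Prop :=
  ∀ x y : Oct, innO (A x) y = - innO x (A y)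


variable {p : ℕ}

/-- `ℝ^{p+9} = 𝕆 ⊕ ℝ^{p+1}`. -/
abbrev Vp (p : ℕ) : Type := Oct × EuclideanSpace ℝ (Fin (p + 1))

/-- The standard inner product on `ℝ^{p+9} = 𝕆 ⊕ ℝ^{p+1}`. -/
def innV (x y : Vp p) : ℝ := innO x.1 y.1 + inner ℝ x.2 y.2

lemma innV_add (x y z : Vp p) : innV (x + y) z = innV x z + innV y z := by
  simp [innV, innO, inner_add_left]; ring

lemma innV_smul (c : ℝ) (x z : Vp p) : innV (c • x) z = c * innV x z := by
  simp only [innV, innO, Prod.smul_fst, Prod.smul_snd, real_inner_smul_left]; ring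

/-- The elementary skew-symmetric endomorphism `E_{uv}` with `E_{uv} u = v`,
`E_{uv} v = -u` (for orthonormal `u, v`):  `x ↦ ⟨x,u⟩v - ⟨x,v⟩u`. -/
def Emap (u v : Vp p) : Vp p →ₗ[ℝ] Vp p where
  toFun x := innV x u • v - innV x v • u
  map_add' x y := by simp only [innV_add, add_smul]; abel
  map_smul' c x := by
    simp only [innV_smul, mul_smul, RingHom.id_apply, smul_sub]

/-- Extension of an endomorphism of `𝕆` by zero on `ℝ^{p+1}`. -/
def extendO (A : Oct →ₗ[ℝ] Oct) : Vp p →ₗ[ℝ] Vp p :=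
  A.prodMap (0 : EuclideanSpace ℝ (Fin (p + 1)) →ₗ[ℝ] EuclideanSpace ℝ (Fin (p + 1)))

def oi : Oct := ((⟨0, 1, 0, 0⟩ : ℍ[ℝ]), 0)
def oj : Oct := ((⟨0, 0, 1, 0⟩ : ℍ[ℝ]), 0)
def ok : Oct := ((⟨0, 0, 0, 1⟩ : ℍ[ℝ]), 0)
def oe : Oct := ((0 : ℍ[ℝ]), 1)

@[simp] lemma oi_re : oi.1.re = 0 := rfl
@[simp] lemma oi_imI : oi.1.imI = 1 := rfl
@[simp] lemma oi_imJ : oi.1.imJ = 0 := rfl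
@[simp] lemma oi_imK : oi.1.imK = 0 := rfl
@[simp] lemma oi_snd : oi.2 = 0 := rfl
@[simp] lemma oj_re : oj.1.re = 0 := rfl
@[simp] lemma oj_imI : oj.1.imI = 0 := rfl
@[simp] lemma oj_imJ : oj.1.imJ = 1 := rfl
@[simp] lemma oj_imK : oj.1.imK = 0 := rfl
@[simp] lemma oj_snd : oj.2 = 0 := rfl
@[simp] lemma ok_re : ok.1.re = 0 := rfl
@[simp] lemma ok_imI : ok.1.imI = 0 := rfl
@[simp] lemma ok_imJ : ok.1.imJ = 0 := rfl
@[simp] lemma ok_imK : ok.1.imK = 1 := rfl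
@[simp] lemma ok_snd : ok.2 = 0 := rfl

private lemma key_one (p : ℕ) (hp : 1 ≤ p) :
    ⁅extendO (Lo oi) (p := p), extendO (Ro oj) (p := p)⁆ +
      (2:ℝ) • ⁅Emap ((oe, 0) : Vp p) (0, EuclideanSpace.single 0 1) +
               Emap ((omul oe oi, 0) : Vp p) (0, EuclideanSpace.single 1 1),
              Emap ((omul oe ok, 0) : Vp p) (0, EuclideanSpace.single 0 1) +
               Emap ((omul oe oj, 0) : Vp p) (0, EuclideanSpace.single 1 1)⁆ = 0 := by
  have hp0 : p ≠ 0 := by omega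
  have h01 : (0 : Fin (p+1)) ≠ 1 := by
    have : (1:ℕ) < p + 1 := by omega
    simp [Fin.ext_iff, Fin.val_one', Nat.mod_eq_of_lt this]
  apply LinearMap.ext
  rintro ⟨⟨a, b⟩, v⟩
  show (extendO (Lo oi) (extendO (Ro oj) _) - extendO (Ro oj) (extendO (Lo oi) _)) +
    (2:ℝ) • (_ - _) = 0
  simp only [extendO, Emap, Lo, Ro, omul, oe, oi_snd, oj_snd, ok_snd, LinearMap.sub_apply, Module.End.mul_apply,
    innV, innO, LinearMap.add_apply, LinearMap.smul_apply, LinearMap.prodMap_apply,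
    LinearMap.coe_mk, AddHom.coe_mk, LinearMap.zero_apply, Prod.fst_add, Prod.snd_add,
    Prod.smul_fst, Prod.smul_snd, Prod.mk_add_mk, Prod.smul_mk, Prod.fst_sub, Prod.snd_sub,
    Prod.mk_sub_mk, Prod.fst_zero, Prod.snd_zero, star_zero, star_one, zero_mul, mul_zero,
    one_mul, mul_one, sub_zero, zero_sub, add_zero, zero_add, smul_zero, zero_smul,
    inner_zero_left, inner_zero_right, Quaternion.inner_def,
    EuclideanSpace.inner_single_left, EuclideanSpace.inner_single_right, starRingEnd_apply,
    star_trivial]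
  refine Prod.ext (Prod.ext ?_ ?_) ?_
  · simp [Quaternion.ext_iff, Quaternion.re_mul, EuclideanSpace.single_apply, Ne.symm h01, hp0]
  · simp [Quaternion.ext_iff, Quaternion.re_mul, EuclideanSpace.single_apply, Ne.symm h01, hp0]
    and_intros <;> ring
  · ext i
    simp [Quaternion.re_mul, EuclideanSpace.single_apply, Ne.symm h01, hp0]

private lemma key_two (p : ℕ) (hp : 1 ≤ p) :
    ⁅extendO (Lo oi) (p := p),
      Emap ((omul oe ok, 0) : Vp p) (0, EuclideanSpace.single 0 1) +
       Emap ((omul oe oj, 0) : Vp p) (0, EuclideanSpace.single 1 1)⁆ +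
    ⁅Emap ((oe, 0) : Vp p) (0, EuclideanSpace.single 0 1) +
      Emap ((omul oe oi, 0) : Vp p) (0, EuclideanSpace.single 1 1),
     extendO (Ro oj) (p := p)⁆ = 0 := by
  apply LinearMap.ext
  rintro ⟨⟨a, b⟩, v⟩
  simp only [LinearMap.add_apply, Ring.lie_def]
  simp only [extendO, Emap, Lo, Ro, omul, oe, oi_snd, oj_snd, ok_snd, LinearMap.sub_apply, Module.End.mul_apply,
    innV, innO, LinearMap.add_apply, LinearMap.smul_apply, LinearMap.prodMap_apply,
    LinearMap.coe_mk, AddHom.coe_mk, LinearMap.zero_apply, Prod.fst_add, Prod.snd_add,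
    Prod.smul_fst, Prod.smul_snd, Prod.mk_add_mk, Prod.smul_mk, Prod.fst_sub, Prod.snd_sub,
    Prod.mk_sub_mk, Prod.fst_zero, Prod.snd_zero, star_zero, star_one, zero_mul, mul_zero,
    one_mul, mul_one, sub_zero, zero_sub, add_zero, zero_add, smul_zero, zero_smul,
    inner_zero_left, inner_zero_right, Quaternion.inner_def,
    EuclideanSpace.inner_single_left, EuclideanSpace.inner_single_right, starRingEnd_apply,
    star_trivial]
  refine Prod.ext (Prod.ext ?_ ?_) ?_
  · simp [Quaternion.ext_iff]
  · simp [Quaternion.ext_iff]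
  · ext i
    simp [Quaternion.re_mul, EuclideanSpace.single_apply]

set_option maxHeartbeats 1000000 in
/-- In `so(p+9)` with `p ≥ 1`, writing `𝕆 = ℍ ⊕ εℍ` with orthonormal
basis `e₁ = ε`, `e₂ = εk`, `e₃ = εi`, `e₄ = εj` of `εℍ` and orthonormal
`e₅, e₆ ∈ ℝ^{p+1}`, the elements `X = L_i + √2(E₁₅ + E₃₆)` and
`Y = R_j + √2(E₂₅ + E₄₆)` commute:  `[X,Y] = 0`. -/
theorem stmt9 (p : ℕ) (hp : 1 ≤ p) :
    let e₁ : Vp p := (oe, 0)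
    let e₂ : Vp p := (omul oe ok, 0)
    let e₃ : Vp p := (omul oe oi, 0)
    let e₄ : Vp p := (omul oe oj, 0)
    let e₅ : Vp p := (0, EuclideanSpace.single 0 1)
    let e₆ : Vp p := (0, EuclideanSpace.single 1 1)
    let X := extendO (Lo oi) + Real.sqrt 2 • (Emap e₁ e₅ + Emap e₃ e₆)
    let Y := extendO (Ro oj) + Real.sqrt 2 • (Emap e₂ e₅ + Emap e₄ e₆)
    ⁅X, Y⁆ = 0 := by
  intro e₁ e₂ e₃ e₄ e₅ e₆ X Y
  have hss : Real.sqrt 2 * Real.sqrt 2 = 2 := Real.mul_self_sqrt (by norm_num)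
  have expand : ⁅X, Y⁆ =
      ⁅extendO (Lo oi) (p := p), extendO (Ro oj) (p := p)⁆ +
        Real.sqrt 2 • (⁅extendO (Lo oi) (p := p), Emap e₂ e₅ + Emap e₄ e₆⁆ +
          ⁅Emap e₁ e₅ + Emap e₃ e₆, extendO (Ro oj) (p := p)⁆) +
        (Real.sqrt 2 * Real.sqrt 2) • ⁅Emap e₁ e₅ + Emap e₃ e₆, Emap e₂ e₅ + Emap e₄ e₆⁆ := by
    simp only [X, Y, Ring.lie_def, add_mul, mul_add, smul_mul_assoc, mul_smul_comm, smul_add, smul_sub, smul_smul]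
    module
  rw [expand, hss]
  simp only [e₁, e₂, e₃, e₄, e₅, e₆]
  rw [key_two p hp, smul_zero, add_zero]
  exact key_one p hp

end
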